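/- arXiv:2210.17330 — 6 statements merged into one kernel-verified Lean document; each statement's English description precedes it below -/
import Mathlib

section
/- Let X be a set and let X' = X ∪ {u} where u is a fresh element not in X (e.g., X' = Option X with u = none). For each x ∈ X let m_x be the equivalence relation on X' defined by: m_x relates a and b iff (a = x ↔ b = x) (its classes are {x} and X'∖{x}). For each Y ⊆ X let e_Y be the equivalence relation on X' defined by: e_Y relates a and b iff a = b, or (a ∉ Y and b ∉ Y) (its classes are the singletons {y} for y ∈ Y, together with X'∖Y). Then: (i) for every Y ⊆ X, e_Y is the infimum ⨅_{x ∈ Y} m_x in the complete lattice of equivalence relations on X'; and (ii) for all Y₁, Y₂ ⊆ X, e_{Y₁} ≤ e_{Y₂} if and only if Y₂ ⊆ Y₁. Consequently Y ↦ e_Y is an order isomorphism from (P(X), ⊇) onto the sub-meet-semilattice of equivalence relations on X' meet-generated by the elements m_x, x ∈ X. -/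
/-- The coatom-type equivalence relation `m_x` on `X' = Option X` (with `u = none`),
whose classes are `{some x}` and `X' \ {some x}`. -/
def mSetoid {X : Type*} (x : X) : Setoid (Option X) where
  r a b := (a = some x ↔ b = some x)
  iseqv := ⟨fun _ => Iff.rfl, Iff.symm, Iff.trans⟩

/-- The equivalence relation `e_Y` on `X' = Option X` associated to an agenda `Y ⊆ X`:
its classes are the singletons `{some y}` for `y ∈ Y`, together with `X' \ Y`. -/
def eSetoid {X : Type*} (Y : Set X) : Setoid (Option X) where
  r a b := a = b ∨ ((∀ y ∈ Y, a ≠ some y) ∧ (∀ y ∈ Y, b ≠ some y))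
  iseqv := by
    constructor
    · intro a; exact Or.inl rfl
    · rintro a b (rfl | ⟨ha, hb⟩)
      · exact Or.inl rfl
      · exact Or.inr ⟨hb, ha⟩
    · rintro a b c (rfl | ⟨ha, hb⟩) (rfl | ⟨hb', hc⟩)
      · exact Or.inl rfl
      · exact Or.inr ⟨hb', hc⟩
      · exact Or.inr ⟨ha, hb⟩
      · exact Or.inr ⟨ha, hc⟩

/-- (i) for every `Y ⊆ X`, `e_Y` is the infimum of the `m_x`, `x ∈ Y`, in the
complete lattice of equivalence relations on `X' = Option X`; and (ii) `e_{Y₁} ≤ e_{Y₂}`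
iff `Y₂ ⊆ Y₁`.  Hence `Y ↦ e_Y` is an order isomorphism from `(P(X), ⊇)` onto the
sub-meet-semilattice meet-generated by the `m_x`. -/
theorem eSetoid_inf_and_order_reversing {X : Type*} :
    (∀ Y : Set X, eSetoid Y = ⨅ x ∈ Y, mSetoid x) ∧
    (∀ Y₁ Y₂ : Set X, eSetoid Y₁ ≤ eSetoid Y₂ ↔ Y₂ ⊆ Y₁) := by
  constructor
  · intro Y
    apply le_antisymm
    · apply le_iInf₂
      intro x hx a b hab
      rcases hab with rfl | ⟨ha, hb⟩
      · exact Iff.rfl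
      · constructor
        · intro h; exact absurd h (ha x hx)
        · intro h; exact absurd h (hb x hx)
    · intro a b hab
      by_cases hy : ∃ y ∈ Y, a = some y
      · obtain ⟨y, hyY, rfl⟩ := hy
        have := (iInf₂_le (f := fun x _ => mSetoid x) y hyY) hab
        exact Or.inl ((this.mp rfl).symm)
      · push_neg at hy
        refine Or.inr ⟨fun y hyY => hy y hyY, fun y hyY hb => ?_⟩
        have := (iInf₂_le (f := fun x _ => mSetoid x) y hyY) hab
        exact hy y hyY (this.mpr hb)
  · intro Y₁ Y₂
    constructor
    · intro h y hy
      by_contra hy1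
      have hrel : (eSetoid Y₁) (some y) none := by
        refine Or.inr ⟨?_, ?_⟩
        · intro z hz hzz
          exact hy1 (Option.some.inj hzz ▸ hz)
        · intro z hz hzz; exact nomatch hzz
      rcases h hrel with h' | ⟨ha, _⟩
      · exact nomatch h'
      · exact ha y hy rfl
    · rintro hsub a b (rfl | ⟨ha, hb⟩)
      · exact Or.inl rfl
      · exact Or.inr ⟨fun y hy => ha y (hsub hy), fun y hy => hb y (hsub hy)⟩
end

section
/- Let (A, X, I) be a formal context and let Y₁ ⊆ Y₂ ⊆ X. If a subset B ⊆ A is Galois-stable with respect to Y₁, then B is Galois-stable with respect to Y₂. -/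
/-- `Y`-restricted upward derivation operator of a formal context `(A, X, I)`:
`B↑_Y = {x ∈ Y | ∀ a ∈ B, (a,x) ∈ I}`. -/
def fcaUp {A X : Type*} (I : Set (A × X)) (Y : Set X) (B : Set A) : Set X :=
  {x ∈ Y | ∀ a ∈ B, (a, x) ∈ I}

/-- Downward derivation operator: `Z↓ = {a ∈ A | ∀ x ∈ Z, (a,x) ∈ I}`. -/
def fcaDown {A X : Type*} (I : Set (A × X)) (Z : Set X) : Set A :=
  {a | ∀ x ∈ Z, (a, x) ∈ I}

/-- `B ⊆ A` is Galois-stable with respect to `Y ⊆ X` if `(B↑_Y)↓ = B`. -/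
def GaloisStable {A X : Type*} (I : Set (A × X)) (Y : Set X) (B : Set A) : Prop :=
  fcaDown I (fcaUp I Y B) = B

/-- if `Y₁ ⊆ Y₂ ⊆ X` and `B ⊆ A` is Galois-stable w.r.t. `Y₁`,
then `B` is Galois-stable w.r.t. `Y₂`. -/
theorem galoisStable_mono {A X : Type*} (I : Set (A × X)) (Y₁ Y₂ : Set X)
    (hY : Y₁ ⊆ Y₂) (B : Set A) (hB : GaloisStable I Y₁ B) :
    GaloisStable I Y₂ B := by
  unfold GaloisStable fcaDown fcaUp at *
  apply Set.Subset.antisymm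
  · intro a ha
    rw [← hB]
    intro x hx
    exact ha x ⟨hY hx.1, hx.2⟩
  · intro a ha x hx
    exact hx.2 a ha
end

section
/- There exist finite sets A and X, a relation I ⊆ A × X, subsets Y₁, Y₂ ⊆ X, and a subset B ⊆ A such that B is Galois-stable with respect to Y₁ and Galois-stable with respect to Y₂, but B is not Galois-stable with respect to Y₁ ∩ Y₂. (Hence the family of feature sets with respect to which B is Galois-stable, although upward closed, need not be a filter. A witnessing example: A = {a,b}, X = {x₁,x₂,x₃}, I = {(a,x₁),(a,x₂),(a,x₃),(b,x₂)}, Y₁ = {x₁,x₂}, Y₂ = {x₂,x₃}, B = {a}.) -/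
/-- there is a finite formal context, feature sets `Y₁, Y₂`, and a set of
objects `B` which is Galois-stable w.r.t. `Y₁` and w.r.t. `Y₂`, but not w.r.t. `Y₁ ∩ Y₂`.
Hence the (upward closed) family of feature sets w.r.t. which `B` is Galois-stable
need not be a filter. -/
theorem galoisStable_not_filter : ∃ (A X : Type), Finite A ∧ Finite X ∧
    ∃ (I : Set (A × X)) (Y₁ Y₂ : Set X) (B : Set A),
      GaloisStable I Y₁ B ∧ GaloisStable I Y₂ B ∧ ¬ GaloisStable I (Y₁ ∩ Y₂) B := by
  refine ⟨Fin 2, Fin 3, inferInstance, inferInstance,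
    {p | p.1 = 0 ∨ p.2 = 1}, {0, 1}, {1, 2}, {0}, ?_, ?_, ?_⟩
  · ext a; unfold fcaDown fcaUp; fin_cases a <;> simp
  · ext a; unfold fcaDown fcaUp; fin_cases a <;> simp
  · intro h
    have : (1 : Fin 2) ∈ ({0} : Set (Fin 2)) := by
      rw [← h]; intro x hx
      simp only [fcaUp, Set.mem_setOf_eq, Set.mem_inter_iff] at hx
      rcases hx with ⟨⟨h1, h2⟩, h3⟩
      have := h3 0 rfl
      right
      fin_cases x <;> simp_all
    simp at this
end

section
/- Let X be a finite set and let m₁, m₂ be mass functions on X. If m₁ ≤_s m₂, then m₁ ≤_↑ m₂. -/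
/-- A (Dempster–Shafer) mass function on a finite set `X`: a nonnegative real-valued
function on subsets of `X` summing to `1`. -/
def IsMassFunction {X : Type*} [Fintype X] (m : Finset X → ℝ) : Prop :=
  (∀ Y, 0 ≤ m Y) ∧ (∑ Y : Finset X, m Y = 1)

/-- The s-ordering on mass functions: `m₁ ≤_s m₂` iff there is a (generalized stochastic)
matrix `S` with nonnegative entries, columns summing to one, `S(W,Y) > 0 → W ⊆ Y`,
and `m₁(W) = Σ_Y S(W,Y)·m₂(Y)`. -/
def sLE {X : Type*} [Fintype X] (m₁ m₂ : Finset X → ℝ) : Prop :=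
  ∃ S : Finset X → Finset X → ℝ,
    (∀ W Y, 0 ≤ S W Y) ∧
    (∀ Y, ∑ W : Finset X, S W Y = 1) ∧
    (∀ W Y, 0 < S W Y → W ⊆ Y) ∧
    (∀ W, m₁ W = ∑ Y : Finset X, S W Y * m₂ Y)

/-- The up-set restricted order: `m₁ ≤_↑ m₂` iff for every upward closed family `𝒱`
of subsets of `X`, `Σ_{Y ∈ 𝒱} m₁(Y) ≤ Σ_{Y ∈ 𝒱} m₂(Y)`. -/
def upLE {X : Type*} [Fintype X] (m₁ m₂ : Finset X → ℝ) : Prop :=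
  ∀ V : Finset (Finset X), (∀ Y ∈ V, ∀ Z : Finset X, Y ⊆ Z → Z ∈ V) →
    (∑ Y ∈ V, m₁ Y) ≤ ∑ Y ∈ V, m₂ Y

/-- `m₁ ≤_s m₂` implies `m₁ ≤_↑ m₂`. -/
theorem sLE_implies_upLE {X : Type*} [Fintype X] (m₁ m₂ : Finset X → ℝ)
    (h₁ : IsMassFunction m₁) (h₂ : IsMassFunction m₂) (h : sLE m₁ m₂) :
    upLE m₁ m₂ := by
  obtain ⟨S, hS0, hScol, hSsub, hSm⟩ := h
  intro V hV
  classical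
  calc ∑ W ∈ V, m₁ W = ∑ W ∈ V, ∑ Y : Finset X, S W Y * m₂ Y := by
        exact Finset.sum_congr rfl fun W _ => hSm W
    _ = ∑ Y : Finset X, (∑ W ∈ V, S W Y) * m₂ Y := by
        rw [Finset.sum_comm]
        exact Finset.sum_congr rfl fun Y _ => (Finset.sum_mul ..).symm
    _ = ∑ Y ∈ V, (∑ W ∈ V, S W Y) * m₂ Y := by
        rw [← Finset.sum_filter_add_sum_filter_not Finset.univ (· ∈ V)]
        have : ∑ Y ∈ Finset.univ.filter (· ∉ V), (∑ W ∈ V, S W Y) * m₂ Y = 0 := by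
          apply Finset.sum_eq_zero
          intro Y hY
          simp only [Finset.mem_filter] at hY
          have : ∑ W ∈ V, S W Y = 0 := by
            apply Finset.sum_eq_zero
            intro W hW
            by_contra hne
            have hpos : 0 < S W Y := lt_of_le_of_ne (hS0 W Y) (Ne.symm hne)
            exact hY.2 (hV W hW Y (hSsub W Y hpos))
          rw [this, zero_mul]
        rw [this, add_zero]
        congr 1
        ext Y
        simp
    _ ≤ ∑ Y ∈ V, m₂ Y := by
        apply Finset.sum_le_sum
        intro Y _
        have hle : ∑ W ∈ V, S W Y ≤ 1 := by
          rw [← hScol Y]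
          exact Finset.sum_le_sum_of_subset_of_nonneg (Finset.subset_univ V)
            (fun W _ _ => hS0 W Y)
        calc (∑ W ∈ V, S W Y) * m₂ Y ≤ 1 * m₂ Y :=
              mul_le_mul_of_nonneg_right hle (h₂.1 Y)
          _ = m₂ Y := one_mul _
end

section
/- Let (A, X, I) be a formal context with X finite, and let m₁, m₂ be mass functions on X with m₁ ≤_↑ m₂. Then for every G ⊆ A, ρ_{m₁}(G) ≤ ρ_{m₂}(G). -/
open scoped Classical in
/-- The stability index of `G ⊆ A`:
`ρ_m(G) = Σ { m(Y) : Y ⊆ X such that G is Galois-stable w.r.t. Y }`. -/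
noncomputable def stabilityIndex {A X : Type*} [Fintype X] (I : Set (A × X))
    (m : Finset X → ℝ) (G : Set A) : ℝ :=
  ∑ Y : Finset X, if GaloisStable I (↑Y : Set X) G then m Y else 0

/-- The β-categorization `ℙ(m, β) = { (G↑_X)↓ : G ⊆ A with ρ_m(G) ≥ β }`. -/
noncomputable def betaCategorization {A X : Type*} [Fintype X] (I : Set (A × X))
    (m : Finset X → ℝ) (β : ℝ) : Set (Set A) :=
  {B | ∃ G : Set A, β ≤ stabilityIndex I m G ∧ fcaDown I (fcaUp I Set.univ G) = B}

/-- if `m₁ ≤_↑ m₂`, then `ρ_{m₁}(G) ≤ ρ_{m₂}(G)` for every `G ⊆ A`. -/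
theorem stabilityIndex_mono {A X : Type*} [Fintype X] (I : Set (A × X))
    (m₁ m₂ : Finset X → ℝ) (h₁ : IsMassFunction m₁) (h₂ : IsMassFunction m₂)
    (h : upLE m₁ m₂) (G : Set A) :
    stabilityIndex I m₁ G ≤ stabilityIndex I m₂ G := by
  classical
  have mono : ∀ Y Z : Finset X, Y ⊆ Z → GaloisStable I (↑Y : Set X) G →
      GaloisStable I (↑Z : Set X) G := by
    intro Y Z hYZ hY
    have hsub : fcaUp I (↑Y : Set X) G ⊆ fcaUp I (↑Z : Set X) G := by
      intro x hx
      exact ⟨Finset.coe_subset.mpr hYZ hx.1, hx.2⟩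
    have hdown : fcaDown I (fcaUp I (↑Z : Set X) G) ⊆ G := by
      intro a ha
      have : a ∈ fcaDown I (fcaUp I (↑Y : Set X) G) := fun x hx => ha x (hsub hx)
      rw [hY] at this; exact this
    have hup : G ⊆ fcaDown I (fcaUp I (↑Z : Set X) G) := by
      intro a ha x hx
      exact hx.2 a ha
    exact Set.Subset.antisymm hdown hup
  have key := h (Finset.univ.filter (fun Y => GaloisStable I (↑Y : Set X) G))
    (by
      intro Y hY Z hYZ
      simp only [Finset.mem_filter, Finset.mem_univ, true_and] at hY ⊢
      exact mono Y Z hYZ hY)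
  simpa [stabilityIndex, Finset.sum_filter] using key
end

section
/- Let (A, X, I) be a formal context with X finite, let m₁, m₂ be mass functions on X with m₁ ≤_↑ m₂, and let β ∈ [0,1]. Then for every B ⊆ A, if B ∈ ℙ(m₁, β) then B ∈ ℙ(m₂, β). -/
lemma galoisStable_mono' {A X : Type*} (I : Set (A × X)) {Y Z : Set X} {G : Set A}
    (hYZ : Y ⊆ Z) (hG : GaloisStable I Y G) : GaloisStable I Z G := by
  apply Set.Subset.antisymm
  · intro a ha
    rw [← hG]
    intro x hx
    exact ha x ⟨hYZ hx.1, hx.2⟩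
  · intro a ha x hx
    exact hx.2 a ha

/-- if `m₁ ≤_↑ m₂` and `β ∈ [0,1]`, then `B ∈ ℙ(m₁, β)` implies
`B ∈ ℙ(m₂, β)`. -/
theorem betaCategorization_mono_upLE {A X : Type*} [Fintype X] (I : Set (A × X))
    (m₁ m₂ : Finset X → ℝ) (h₁ : IsMassFunction m₁) (h₂ : IsMassFunction m₂)
    (h : upLE m₁ m₂) (β : ℝ) (h0 : 0 ≤ β) (hβ1 : β ≤ 1) (B : Set A)
    (hB : B ∈ betaCategorization I m₁ β) : B ∈ betaCategorization I m₂ β := by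
  classical
  obtain ⟨G, hρ, hEq⟩ := hB
  refine ⟨G, le_trans hρ ?_, hEq⟩
  have key : ∀ m : Finset X → ℝ, stabilityIndex I m G
      = ∑ Y ∈ Finset.univ.filter (fun Y : Finset X => GaloisStable I (↑Y : Set X) G), m Y := by
    intro m
    rw [Finset.sum_filter]
    rfl
  rw [key m₁, key m₂]
  apply h
  intro Y hY Z hYZ
  simp only [Finset.mem_filter, Finset.mem_univ, true_and] at hY ⊢
  exact galoisStable_mono' I (by exact_mod_cast hYZ) hY
end
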